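/- Let X be a real Banach space, A : X → Set X an accretive operator with zer A ≠ ∅, and for each γ > 0 let J_γ : X → X be a resolvent function of A. Let α ∈ [0,1), f : X → X an α-contraction, x ∈ X, e* ∈ X, and set J = 2⌈1/(1 − α)⌉, α_n = 2/((1 − α)(n + J)), λ_n = (n + J)/(n + J − 1), e_n = (1/(n + J)²) • e* for all n ∈ ℕ; let (x_n) be the VAMe iteration x_0 = x, x_{n+1} = α_n • f(x_n) + (1 − α_n) • J_{λ_n}(x_n) + e_n. Let z ∈ zer A and K_z ∈ ℕ, K_z ≥ 1, with K_z ≥ max{‖x − z‖, ‖f(z) − z‖/(1 − α)} + ⌈‖e*‖/(J − 1)⌉. Define Ψ₀(k) = 18·K_z·⌈1/(1 − α)⌉²·(k + 1) + 3·⌈‖e*‖⌉·⌈1/(1 − α)⌉·(k + 1) − 2⌈1/(1 − α)⌉ and Θ₀(k) = 36·K_z·⌈1/(1 − α)⌉²·(k + 1) + 6·⌈‖e*‖⌉·⌈1/(1 − α)⌉·(k + 1) − 2⌈1/(1 − α)⌉. Then Ψ₀ is a rate of (J_{λ_n})-asymptotic regularity of (x_n), and for every m ∈ ℕ, Θ₀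 is a rate of J_{λ_m}-asymptotic regularity of (x_n). -/

import Mathlib

lemma aux_final (t K c Ec C : ℝ) (ht : 2 ≤ t) (hK : 1 ≤ K) (hc : 1 ≤ c) (hEc : 0 ≤ Ec)
    (hC : C = 8*K*c + 2*Ec) :
    (1 - 2/(t+1)) * (C/t) + 2*K/t^2 + 4*K*c/(t*(t+1)) + Ec*(1/t^2 - 1/(t+1)^2) ≤ C/(t+1) := by
  have ht0 : (0:ℝ) < t := by linarith
  have ht1 : (0:ℝ) < t + 1 := by linarith
  rw [← sub_nonneg]
  have h1 : C/(t+1) - ((1 - 2/(t+1)) * (C/t) + 2*K/t^2 + 4*K*c/(t*(t+1)) + Ec*(1/t^2 - 1/(t+1)^2))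
      = (C*t*(t+1) - 2*K*(t+1)^2 - 4*K*c*t*(t+1) - Ec*(2*t+1)) / (t^2*(t+1)^2) := by
    field_simp
    ring
  rw [h1]
  apply div_nonneg _ (by positivity)
  have f1 : 2*K*(t+1)^2 ≤ 4*K*c*t*(t+1) := by
    nlinarith [mul_nonneg (mul_nonneg (by linarith : (0:ℝ) ≤ 2*K) (by linarith : (0:ℝ) ≤ t+1)) (by linarith : (0:ℝ) ≤ t - 1),
      mul_nonneg (mul_nonneg (mul_nonneg (by linarith : (0:ℝ) ≤ 4*K) (by linarith : (0:ℝ) ≤ c - 1)) ht0.le) ht1.le]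
  have f2 : Ec*(2*t+1) ≤ 2*Ec*(t*(t+1)) := by nlinarith [mul_nonneg hEc (by nlinarith : (0:ℝ) ≤ 2*t^2 - 1)]
  nlinarith [f1, f2]


lemma aux_bound_step (N B M E t J en : ℝ) (ht2 : 2 ≤ t) (hJ2 : 2 ≤ J) (hJt : J ≤ t)
    (hE0 : 0 ≤ E) (h2 : N ≤ B + (2/t)*(M - B) + en)
    (ih : B ≤ M + E*(1/(J-1) - 1/(t-1))) (he2 : en ≤ E*(1/(t-1) - 1/t)) :
    N ≤ M + E*(1/(J-1) - 1/t) := by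
  have ht0 : (0:ℝ) < t := by linarith
  have hEn0 : 0 ≤ E*(1/(J-1) - 1/(t-1)) := by
    apply mul_nonneg hE0
    have := one_div_le_one_div_of_le (by linarith : (0:ℝ) < J - 1) (by linarith : J - 1 ≤ t - 1)
    linarith
  have hu0 : (0:ℝ) ≤ 2/t := by positivity
  have hu1 : 2/t ≤ 1 := by rw [div_le_one ht0]; linarith
  nlinarith [mul_nonneg (by linarith : (0:ℝ) ≤ 1 - 2/t)
      (by linarith : (0:ℝ) ≤ M + E*(1/(J-1) - 1/(t-1)) - B),
    mul_nonneg hu0 hEn0]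

lemma aux_base (J K E Ec Cc c v : ℝ) (hJ : J = 2*c) (hc : 1 ≤ c) (hK : 1 ≤ K)
    (hE0 : 0 ≤ E) (hE : E ≤ Ec) (hCc : Cc = 8*K*c + 2*Ec)
    (hv : v ≤ 2*K + E/J^2) : v ≤ Cc/J := by
  have hJ2 : (2:ℝ) ≤ J := by rw [hJ]; linarith
  have hJ0 : (0:ℝ) < J := by linarith
  rw [le_div_iff₀ hJ0]
  have h1 : v*J ≤ (2*K + E/J^2)*J := mul_le_mul_of_nonneg_right hv hJ0.le
  have h2 : (2*K + E/J^2)*J = 2*K*J + E/J := by field_simp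
  have h3 : E/J ≤ Ec := le_trans (div_le_self hE0 (by linarith)) hE
  have h4 : 2*K*J = 4*K*c := by rw [hJ]; ring
  have h5 : (1:ℝ) ≤ K*c := by nlinarith
  nlinarith [h1, h2, h3, h4, h5]

lemma aux_succ (t d v K c Ec Cc a' α E : ℝ)
    (ht2 : 2 ≤ t) (hK : 1 ≤ K) (hc : 1 ≤ c) (hEc0 : 0 ≤ Ec) (hE0 : 0 ≤ E) (hE : E ≤ Ec)
    (hβ : 0 < 1 - α) (hαc : 1 ≤ (1-α)*c)
    (ha'0 : 0 ≤ a') (ha'1 : a' ≤ 1) (ha'β : a'*(1-α) = 2/(t+1))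
    (hCc : Cc = 8*K*c + 2*Ec) (hd : d ≤ Cc/t)
    (hv : v ≤ a'*(α*d) + (1-a')*(d + 1/t^2*(2*K)) + 2/((1-α)*t*(t+1))*(2*K)
      + E*(1/t^2 - 1/(t+1)^2)) :
    v ≤ Cc/(t+1) := by
  have ht0 : (0:ℝ) < t := by linarith
  have ht10 : (0:ℝ) < t + 1 := by linarith
  have hd0 : (0:ℝ) ≤ Cc/t := by rw [hCc]; positivity
  have l1 : (1-a')*(d + 1/t^2*(2*K)) ≤ (1-a')*d + 1/t^2*(2*K) := by
    have q0 : (0:ℝ) ≤ 1/t^2*(2*K) := mul_nonneg (by positivity) (by linarith)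
    nlinarith [mul_nonneg ha'0 q0]
  have l2 : a'*(α*d) + (1-a')*d = (1 - 2/(t+1))*d := by
    rw [← ha'β]; ring
  have l3 : 2/((1-α)*t*(t+1))*(2*K) ≤ 4*K*c/(t*(t+1)) := by
    rw [div_mul_eq_mul_div, div_le_div_iff₀ (mul_pos (mul_pos hβ ht0) ht10) (mul_pos ht0 ht10)]
    nlinarith [mul_nonneg (mul_nonneg (mul_nonneg (by linarith : (0:ℝ) ≤ 4*K) ht0.le) ht10.le)
      (sub_nonneg.mpr hαc)]
  have l4 : E*(1/t^2 - 1/(t+1)^2) ≤ Ec*(1/t^2 - 1/(t+1)^2) := by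
    apply mul_le_mul_of_nonneg_right hE
    have h9 : t^2 ≤ (t+1)^2 := by nlinarith
    have := one_div_le_one_div_of_le (pow_pos ht0 2) h9
    linarith
  have h1a2 : (0:ℝ) ≤ 1 - 2/(t+1) := by
    have : 2/(t+1) ≤ 1 := by rw [div_le_one ht10]; linarith
    linarith
  have l5 : (1 - 2/(t+1))*d ≤ (1 - 2/(t+1))*(Cc/t) := mul_le_mul_of_nonneg_left hd h1a2
  have hfin := aux_final t K c Ec Cc ht2 hK hc hEc0 hCc
  have s1 : v ≤ (1 - 2/(t+1))*d + 1/t^2*(2*K) + 2/((1-α)*t*(t+1))*(2*K)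
      + E*(1/t^2 - 1/(t+1)^2) := by linarith
  have s2 : (1:ℝ)/t^2*(2*K) = 2*K/t^2 := by ring
  linarith [s1, s2, l3, l4, l5, hfin]

lemma aux_reg (v dd q en t K c Ec E : ℝ) (ht2 : 2 ≤ t) (hK : 1 ≤ K) (hc : 1 ≤ c)
    (hE : E ≤ Ec) (hE0 : 0 ≤ E)
    (hv : v ≤ dd + q + en) (hdd : dd ≤ (8*K*c + 2*Ec)/t) (hq : q ≤ 2*c/t*(2*K))
    (hen : en ≤ E/t^2) : v ≤ (12*K*c + 3*Ec)/t := by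
  have ht0 : (0:ℝ) < t := by linarith
  have h3 : E/t^2 ≤ Ec/t := by
    have i1 : E*t ≤ Ec*t := mul_le_mul_of_nonneg_right hE ht0.le
    have i2 : Ec*t ≤ Ec*t^2 := by
      nlinarith [mul_nonneg (le_trans hE0 hE) (by nlinarith : (0:ℝ) ≤ t^2 - t)]
    rw [div_le_div_iff₀ (pow_pos ht0 2) ht0]
    nlinarith [i1, i2]
  have h4 : (8*K*c+2*Ec)/t + 2*c/t*(2*K) + Ec/t = (12*K*c+3*Ec)/t := by
    field_simp; ring
  linarith

lemma aux_frac1 (K c Ec k S : ℝ) (hK : 1 ≤ K) (hc : 1 ≤ c) (hEc0 : 0 ≤ Ec) (hk : 0 ≤ k)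
    (h : 18*K*c^2*(k+1) + 3*Ec*c*(k+1) ≤ S) : (12*K*c+3*Ec)*(k+1) ≤ S := by
  nlinarith [mul_nonneg (mul_nonneg (mul_nonneg (by linarith : (0:ℝ) ≤ 6*K) (by linarith : (0:ℝ) ≤ c))
      (by linarith : (0:ℝ) ≤ 3*c - 2)) (by linarith : (0:ℝ) ≤ k+1),
    mul_nonneg (mul_nonneg hEc0 (by linarith : (0:ℝ) ≤ c - 1)) (by linarith : (0:ℝ) ≤ k+1)]

lemma aux_frac2 (K c Ec k S : ℝ) (hK : 1 ≤ K) (hc : 1 ≤ c) (hEc0 : 0 ≤ Ec) (hk : 0 ≤ k)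
    (h : 36*K*c^2*(k+1) + 6*Ec*c*(k+1) ≤ S) : 2*(12*K*c+3*Ec)*(k+1) ≤ S := by
  nlinarith [mul_nonneg (mul_nonneg (mul_nonneg (by linarith : (0:ℝ) ≤ 12*K) (by linarith : (0:ℝ) ≤ c))
      (by linarith : (0:ℝ) ≤ 3*c - 2)) (by linarith : (0:ℝ) ≤ k+1),
    mul_nonneg (mul_nonneg hEc0 (by linarith : (0:ℝ) ≤ c - 1)) (by linarith : (0:ℝ) ≤ k+1)]

set_option maxHeartbeats 1000000 in
/-- Linear rates of `(J_{λ_n})`- and `J_{λ_m}`-asymptotic regularity of the VAMe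
iteration for concrete instances of the parameter sequences. -/
theorem stmt_18 {X : Type*} [NormedAddCommGroup X] [NormedSpace ℝ X] [CompleteSpace X]
    (A : X → Set X)
    (hA : ∀ x y u v : X, u ∈ A x → v ∈ A y → ∀ γ : ℝ, 0 < γ →
      ‖x - y‖ ≤ ‖x - y + γ • (u - v)‖)
    (hzer : ∃ z : X, (0 : X) ∈ A z)
    (Jr : ℝ → X → X)
    (hJ : ∀ γ : ℝ, 0 < γ → ∀ x : X, γ⁻¹ • (x - Jr γ x) ∈ A (Jr γ x))
    (α : ℝ) (hα0 : 0 ≤ α) (hα1 : α < 1)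
    (f : X → X) (hf : ∀ x y : X, ‖f x - f y‖ ≤ α * ‖x - y‖)
    (x : X) (estar : X)
    (Jn : ℕ) (hJn : Jn = 2 * ⌈1 / (1 - α)⌉₊)
    (a : ℕ → ℝ) (ha : ∀ n : ℕ, a n = 2 / ((1 - α) * ((n : ℝ) + Jn)))
    (lam : ℕ → ℝ) (hlamdef : ∀ n : ℕ, lam n = ((n : ℝ) + Jn) / ((n : ℝ) + Jn - 1))
    (e : ℕ → X) (he : ∀ n : ℕ, e n = (1 / ((n : ℝ) + Jn) ^ 2) • estar)
    (xs : ℕ → X) (hxs0 : xs 0 = x)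
    (hxs : ∀ n : ℕ, xs (n + 1) = a n • f (xs n) + (1 - a n) • Jr (lam n) (xs n) + e n)
    (z : X) (hz : (0 : X) ∈ A z)
    (Kz : ℕ) (hKz1 : 1 ≤ Kz)
    (hKz : max ‖x - z‖ (‖f z - z‖ / (1 - α)) +
      (⌈‖estar‖ / ((Jn : ℝ) - 1)⌉₊ : ℝ) ≤ (Kz : ℝ))
    (Ψ₀ : ℕ → ℕ)
    (hΨ₀ : ∀ k : ℕ, Ψ₀ k =
      18 * Kz * ⌈1 / (1 - α)⌉₊ ^ 2 * (k + 1) +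
        3 * ⌈‖estar‖⌉₊ * ⌈1 / (1 - α)⌉₊ * (k + 1) - 2 * ⌈1 / (1 - α)⌉₊)
    (Θ₀ : ℕ → ℕ)
    (hΘ₀ : ∀ k : ℕ, Θ₀ k =
      36 * Kz * ⌈1 / (1 - α)⌉₊ ^ 2 * (k + 1) +
        6 * ⌈‖estar‖⌉₊ * ⌈1 / (1 - α)⌉₊ * (k + 1) - 2 * ⌈1 / (1 - α)⌉₊) :
    (∀ k : ℕ, ∀ n, Ψ₀ k ≤ n → ‖Jr (lam n) (xs n) - xs n‖ ≤ 1 / (k + 1)) ∧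
    (∀ m : ℕ, ∀ k : ℕ, ∀ n, Θ₀ k ≤ n → ‖Jr (lam m) (xs n) - xs n‖ ≤ 1 / (k + 1)) := by
  -- scalar facts
  have hβ : (0:ℝ) < 1 - α := by linarith
  set c : ℕ := ⌈1 / (1 - α)⌉₊ with hc_def
  have hc1 : 1 ≤ c := by rw [hc_def]; exact Nat.ceil_pos.mpr (by positivity)
  have hcr : 1 / (1 - α) ≤ (c : ℝ) := by rw [hc_def]; exact Nat.le_ceil _
  clear_value c
  have hcr1 : (1:ℝ) ≤ (c:ℝ) := by exact_mod_cast hc1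
  have hαc : 1 ≤ (1 - α) * (c:ℝ) := by
    have := (div_le_iff₀ hβ).mp hcr; nlinarith
  have hJnr : (Jn:ℝ) = 2 * (c:ℝ) := by rw [hJn]; push_cast; ring
  have hJ2 : (2:ℝ) ≤ (Jn:ℝ) := by rw [hJnr]; linarith
  have hs2 : ∀ n : ℕ, (2:ℝ) ≤ (n:ℝ) + Jn := by
    intro n; have : (0:ℝ) ≤ (n:ℝ) := Nat.cast_nonneg n; linarith
  have hs0 : ∀ n : ℕ, (0:ℝ) < (n:ℝ) + Jn := fun n => by linarith [hs2 n]
  have hden1 : ∀ n : ℕ, (1:ℝ) ≤ (n:ℝ) + Jn - 1 := fun n => by linarith [hs2 n]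
  set K : ℝ := (Kz : ℝ) with hK_def
  have hK1 : (1:ℝ) ≤ K := by rw [hK_def]; exact_mod_cast hKz1
  clear_value K
  set Ec : ℝ := (⌈‖estar‖⌉₊ : ℝ) with hEc_def
  have hEc : ‖estar‖ ≤ Ec := by rw [hEc_def]; exact Nat.le_ceil _
  clear_value Ec
  have hEc0 : (0:ℝ) ≤ Ec := le_trans (norm_nonneg _) hEc
  -- operator facts
  have hnonexp : ∀ γ : ℝ, 0 < γ → ∀ p q : X, ‖Jr γ p - Jr γ q‖ ≤ ‖p - q‖ := by
    intro γ hγ p q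
    have h := hA (Jr γ p) (Jr γ q) _ _ (hJ γ hγ p) (hJ γ hγ q) γ hγ
    have heq : Jr γ p - Jr γ q + γ • (γ⁻¹ • (p - Jr γ p) - γ⁻¹ • (q - Jr γ q)) = p - q := by
      rw [smul_sub, smul_inv_smul₀ hγ.ne', smul_inv_smul₀ hγ.ne']; abel
    rwa [heq] at h
  have hfix : ∀ γ : ℝ, 0 < γ → Jr γ z = z := by
    intro γ hγ
    have h := hA z (Jr γ z) 0 _ hz (hJ γ hγ z) γ hγ
    have heq : z - Jr γ z + γ • ((0:X) - γ⁻¹ • (z - Jr γ z)) = 0 := by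
      rw [smul_sub, smul_zero, smul_inv_smul₀ hγ.ne']; abel
    rw [heq, norm_zero] at h
    have h2 : z - Jr γ z = 0 := by rwa [norm_le_zero_iff] at h
    exact (sub_eq_zero.mp h2).symm
  have hres : ∀ γ μ : ℝ, 0 < γ → 0 < μ → ∀ y : X,
      ‖Jr γ y - Jr μ y‖ ≤ |1 - γ / μ| * ‖y - Jr μ y‖ := by
    intro γ μ hγ hμ y
    have h := hA (Jr γ y) (Jr μ y) _ _ (hJ γ hγ y) (hJ μ hμ y) γ hγ
    have heq : Jr γ y - Jr μ y + γ • (γ⁻¹ • (y - Jr γ y) - μ⁻¹ • (y - Jr μ y))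
        = (1 - γ / μ) • (y - Jr μ y) := by
      rw [smul_sub, smul_inv_smul₀ hγ.ne', div_eq_mul_inv]; module
    rw [heq, norm_smul, Real.norm_eq_abs] at h
    exact h
  -- lam facts
  have hlam_pos : ∀ n : ℕ, 0 < lam n := by
    intro n; rw [hlamdef]
    exact div_pos (hs0 n) (by linarith [hden1 n])
  have hlam_ge1 : ∀ n : ℕ, 1 ≤ lam n := by
    intro n; rw [hlamdef, le_div_iff₀ (by linarith [hden1 n])]; linarith [hden1 n]
  have hlam_le2 : ∀ n : ℕ, lam n ≤ 2 := by
    intro n; rw [hlamdef, div_le_iff₀ (by linarith [hden1 n])]; linarith [hs2 n]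
  -- a facts
  have ha_nonneg : ∀ n : ℕ, 0 ≤ a n := by
    intro n; rw [ha]
    exact div_nonneg (by norm_num) (mul_pos hβ (hs0 n)).le
  have haβ : ∀ n : ℕ, a n * (1 - α) = 2 / ((n:ℝ) + Jn) := by
    intro n
    have h2 := (hs0 n).ne'
    rw [ha]; field_simp
  have ha_le1 : ∀ n : ℕ, a n ≤ 1 := by
    intro n
    rw [ha, div_le_one (mul_pos hβ (hs0 n))]
    have h2 : (1-α) * (2*(c:ℝ)) ≤ (1-α)*((n:ℝ)+Jn) := by
      apply mul_le_mul_of_nonneg_left ?_ hβ.le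
      rw [← hJnr]; linarith [Nat.cast_nonneg (α := ℝ) n]
    nlinarith
  have ha_c : ∀ n : ℕ, a n ≤ 2*(c:ℝ)/((n:ℝ)+Jn) := by
    intro n
    rw [ha, div_le_div_iff₀ (mul_pos hβ (hs0 n)) (hs0 n)]
    nlinarith [mul_nonneg (by linarith [hs0 n] : (0:ℝ) ≤ 2*((n:ℝ)+Jn)) (sub_nonneg.mpr hαc)]
  -- error norms
  have hen : ∀ n : ℕ, ‖e n‖ = ‖estar‖ / ((n:ℝ) + Jn)^2 := by
    intro n
    rw [he, norm_smul, Real.norm_eq_abs,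
      abs_of_pos (by have := hs0 n; positivity : (0:ℝ) < 1/((n:ℝ)+Jn)^2)]
    rw [one_div, inv_mul_eq_div]
  -- M facts
  set M : ℝ := max ‖x - z‖ (‖f z - z‖ / (1 - α)) with hM_def
  clear_value M
  have hM0 : 0 ≤ M := by rw [hM_def]; exact le_trans (norm_nonneg _) (le_max_left _ _)
  have hMK : M + ‖estar‖ / ((Jn:ℝ) - 1) ≤ K := by
    have h1 := Nat.le_ceil (‖estar‖ / ((Jn:ℝ) - 1))
    linarith
  have hMK' : M ≤ K := by
    have h0 : 0 ≤ ‖estar‖ / ((Jn:ℝ) - 1) := div_nonneg (norm_nonneg _) (by linarith)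
    linarith
  have hfzM : ‖f z - z‖ ≤ (1 - α) * M := by
    have h := le_max_right ‖x - z‖ (‖f z - z‖ / (1 - α))
    rw [← hM_def, div_le_iff₀ hβ] at h; linarith
  have hfb : ∀ n : ℕ, ‖f (xs n) - z‖ ≤ α * ‖xs n - z‖ + (1-α) * M := by
    intro n
    have hsplit : f (xs n) - z = (f (xs n) - f z) + (f z - z) := by abel
    calc ‖f (xs n) - z‖ ≤ ‖f (xs n) - f z‖ + ‖f z - z‖ := by rw [hsplit]; exact norm_add_le _ _
      _ ≤ α * ‖xs n - z‖ + (1-α) * M := add_le_add (hf _ _) hfzM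
  have hJb : ∀ n : ℕ, ‖Jr (lam n) (xs n) - z‖ ≤ ‖xs n - z‖ := by
    intro n
    have h := hnonexp (lam n) (hlam_pos n) (xs n) z
    rwa [hfix (lam n) (hlam_pos n)] at h
  -- boundedness
  have hB : ∀ n : ℕ, ‖xs n - z‖ ≤ M + ‖estar‖ * (1/((Jn:ℝ)-1) - 1/((n:ℝ)+Jn-1)) := by
    intro n; induction n with
    | zero =>
      have h0 : ((0:ℕ):ℝ) + (Jn:ℝ) - 1 = (Jn:ℝ) - 1 := by push_cast; ring
      rw [hxs0, h0, sub_self, mul_zero, add_zero, hM_def]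
      exact le_max_left _ _
    | succ n ih =>
      have ht0 := hs0 n
      have ht2 := hs2 n
      have hd1 := hden1 n
      set t : ℝ := (n:ℝ) + (Jn:ℝ) with htdef
      clear_value t
      set En : ℝ := ‖estar‖ * (1/((Jn:ℝ)-1) - 1/(t-1)) with hEndef
      clear_value En
      have hEn0 : 0 ≤ En := by
        rw [hEndef]
        apply mul_nonneg (norm_nonneg _)
        have h1 : 1/(t-1) ≤ 1/((Jn:ℝ)-1) := by
          apply one_div_le_one_div_of_le (by linarith)
          rw [htdef]; linarith [Nat.cast_nonneg (α := ℝ) n]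
        linarith
      have hid : xs (n+1) - z = a n • (f (xs n) - z) + (1 - a n) • (Jr (lam n) (xs n) - z) + e n := by
        rw [hxs n]; module
      have h1 : ‖xs (n+1) - z‖ ≤ a n * ‖f (xs n) - z‖ + (1 - a n) * ‖Jr (lam n) (xs n) - z‖ + ‖e n‖ := by
        rw [hid]
        refine le_trans norm_add₃_le ?_
        rw [norm_smul, norm_smul, Real.norm_eq_abs, Real.norm_eq_abs,
          abs_of_nonneg (ha_nonneg n), abs_of_nonneg (by linarith [ha_le1 n] : (0:ℝ) ≤ 1 - a n)]
      have hu0 : (0:ℝ) ≤ 2/t := by positivity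
      have hu1 : 2/t ≤ 1 := by rw [div_le_one ht0]; linarith
      have h2 : ‖xs (n+1) - z‖ ≤ ‖xs n - z‖ + (2/t) * (M - ‖xs n - z‖) + ‖e n‖ := by
        have e2 : a n * ‖f (xs n) - z‖ ≤ a n * (α * ‖xs n - z‖ + (1-α)*M) :=
          mul_le_mul_of_nonneg_left (hfb n) (ha_nonneg n)
        have e3 : (1 - a n) * ‖Jr (lam n) (xs n) - z‖ ≤ (1 - a n) * ‖xs n - z‖ :=
          mul_le_mul_of_nonneg_left (hJb n) (by linarith [ha_le1 n])
        have e4 := haβ n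
        rw [← htdef] at e4
        nlinarith [h1, e2, e3]
      have he2 : ‖e n‖ ≤ ‖estar‖ * (1/(t-1) - 1/t) := by
        rw [hen n, ← htdef]
        have key : (1:ℝ)/(t-1) - 1/t = 1/(t*(t-1)) := by
          field_simp
          ring
        rw [key, mul_one_div]
        exact div_le_div_of_nonneg_left (norm_nonneg _) (by nlinarith) (by nlinarith)
      have hgoal : ((n+1:ℕ):ℝ) + (Jn:ℝ) - 1 = t := by rw [htdef]; push_cast; ring
      rw [hgoal]
      have hJt : (Jn:ℝ) ≤ t := by rw [htdef]; linarith [Nat.cast_nonneg (α := ℝ) n]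
      rw [hEndef] at ih
      exact aux_bound_step _ _ _ _ _ _ _ ht2 hJ2 hJt (norm_nonneg estar) h2 ih he2
  have hBK : ∀ n : ℕ, ‖xs n - z‖ ≤ K := by
    intro n
    have h := hB n
    have h1 : (0:ℝ) ≤ 1/((n:ℝ)+Jn-1) := by have := hden1 n; positivity
    have h2 : ‖estar‖*(1/((Jn:ℝ)-1) - 1/((n:ℝ)+Jn-1)) ≤ ‖estar‖/((Jn:ℝ)-1) := by
      calc ‖estar‖*(1/((Jn:ℝ)-1) - 1/((n:ℝ)+Jn-1)) ≤ ‖estar‖*(1/((Jn:ℝ)-1)) :=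
            mul_le_mul_of_nonneg_left (by linarith) (norm_nonneg _)
        _ = ‖estar‖/((Jn:ℝ)-1) := mul_one_div _ _
    linarith [hMK]
  have hfK : ∀ n : ℕ, ‖f (xs n) - z‖ ≤ K := by
    intro n
    have h1 := hfb n
    have h2 : α * ‖xs n - z‖ ≤ α * K := mul_le_mul_of_nonneg_left (hBK n) hα0
    have h3 : (1-α) * M ≤ (1-α) * K := mul_le_mul_of_nonneg_left hMK' hβ.le
    nlinarith
  have hJK : ∀ n : ℕ, ‖Jr (lam n) (xs n) - z‖ ≤ K := fun n => le_trans (hJb n) (hBK n)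
  have hfJ : ∀ n : ℕ, ‖f (xs n) - Jr (lam n) (xs n)‖ ≤ 2*K := by
    intro n
    have hsplit : f (xs n) - Jr (lam n) (xs n) = (f (xs n) - z) - (Jr (lam n) (xs n) - z) := by abel
    rw [hsplit]
    exact le_trans (norm_sub_le _ _) (by linarith [hfK n, hJK n])
  have hJxx : ∀ n : ℕ, ‖Jr (lam n) (xs n) - xs n‖ ≤ 2*K := by
    intro n
    have hsplit : Jr (lam n) (xs n) - xs n = (Jr (lam n) (xs n) - z) - (xs n - z) := by abel
    rw [hsplit]
    exact le_trans (norm_sub_le _ _) (by linarith [hJK n, hBK n])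
  have hfxx : ∀ n : ℕ, ‖f (xs n) - xs n‖ ≤ 2*K := by
    intro n
    have hsplit : f (xs n) - xs n = (f (xs n) - z) - (xs n - z) := by abel
    rw [hsplit]
    exact le_trans (norm_sub_le _ _) (by linarith [hfK n, hBK n])
  -- the difference rate
  set Cc : ℝ := 8*K*(c:ℝ) + 2*Ec with hCc_def
  clear_value Cc
  have hdiff : ∀ n : ℕ, ‖xs (n+1) - xs n‖ ≤ Cc / ((n:ℝ) + Jn) := by
    intro n; induction n with
    | zero =>
      have hid : xs 1 - xs 0 = a 0 • (f (xs 0) - xs 0) + (1 - a 0) • (Jr (lam 0) (xs 0) - xs 0) + e 0 := by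
        rw [hxs 0]; module
      have h1 : ‖xs 1 - xs 0‖ ≤ a 0 * (2*K) + (1 - a 0) * (2*K) + ‖e 0‖ := by
        rw [hid]
        refine le_trans norm_add₃_le ?_
        rw [norm_smul, norm_smul, Real.norm_eq_abs, Real.norm_eq_abs,
          abs_of_nonneg (ha_nonneg 0), abs_of_nonneg (by linarith [ha_le1 0] : (0:ℝ) ≤ 1 - a 0)]
        exact add_le_add (add_le_add
          (mul_le_mul_of_nonneg_left (hfxx 0) (ha_nonneg 0))
          (mul_le_mul_of_nonneg_left (hJxx 0) (by linarith [ha_le1 0]))) le_rfl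
      have hz0 : ((0:ℕ):ℝ) + (Jn:ℝ) = (Jn:ℝ) := by push_cast; ring
      have he0 : ‖e 0‖ = ‖estar‖/((Jn:ℝ))^2 := by rw [hen 0, hz0]
      have hv : ‖xs (0+1) - xs 0‖ ≤ 2*K + ‖estar‖/((Jn:ℝ))^2 := by
        have hsum0 : a 0 * (2*K) + (1 - a 0) * (2*K) = 2*K := by ring
        rw [he0] at h1
        linarith [h1]
      have hfin := aux_base ((Jn:ℝ)) K ‖estar‖ Ec Cc (c:ℝ) _ hJnr hcr1 hK1
        (norm_nonneg _) hEc hCc_def hv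
      calc ‖xs (0+1) - xs 0‖ ≤ Cc / (Jn:ℝ) := hfin
        _ = Cc / (((0:ℕ):ℝ) + Jn) := by rw [hz0]
    | succ n ih =>
      have ht0 := hs0 n
      have ht2 := hs2 n
      set t : ℝ := (n:ℝ) + (Jn:ℝ) with htdef
      clear_value t
      have ht10 : (0:ℝ) < t + 1 := by linarith
      have hcast : ((n+1:ℕ):ℝ) + (Jn:ℝ) = t + 1 := by rw [htdef]; push_cast; ring
      rw [hcast]
      set d : ℝ := ‖xs (n+1) - xs n‖ with hddef
      clear_value d
      have hid : xs (n+1+1) - xs (n+1) =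
          a (n+1) • (f (xs (n+1)) - f (xs n))
          + (1 - a (n+1)) • (Jr (lam (n+1)) (xs (n+1)) - Jr (lam n) (xs n))
          + (a (n+1) - a n) • (f (xs n) - Jr (lam n) (xs n))
          + (e (n+1) - e n) := by
        rw [hxs (n+1), hxs n]; module
      have hratio : 1 - lam (n+1) / lam n = 1/t^2 := by
        rw [hlamdef (n+1), hlamdef n, hcast, ← htdef, show t+1-1 = t from by ring]
        have h1 : t ≠ 0 := ht0.ne'
        have h2 : t - 1 ≠ 0 := by intro h; nlinarith
        field_simp
        ring
      have hb1 : ‖a (n+1) • (f (xs (n+1)) - f (xs n))‖ ≤ a (n+1) * (α * d) := by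
        rw [hddef, norm_smul, Real.norm_eq_abs, abs_of_nonneg (ha_nonneg (n+1))]
        exact mul_le_mul_of_nonneg_left (hf _ _) (ha_nonneg (n+1))
      have hb2 : ‖(1 - a (n+1)) • (Jr (lam (n+1)) (xs (n+1)) - Jr (lam n) (xs n))‖
          ≤ (1 - a (n+1)) * (d + 1/t^2 * (2*K)) := by
        rw [hddef, norm_smul, Real.norm_eq_abs, abs_of_nonneg (by linarith [ha_le1 (n+1)] : (0:ℝ) ≤ 1 - a (n+1))]
        apply mul_le_mul_of_nonneg_left ?_ (by linarith [ha_le1 (n+1)])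
        have i1 : Jr (lam (n+1)) (xs (n+1)) - Jr (lam n) (xs n) =
            (Jr (lam (n+1)) (xs (n+1)) - Jr (lam (n+1)) (xs n)) + (Jr (lam (n+1)) (xs n) - Jr (lam n) (xs n)) := by
          abel
        rw [i1]
        refine le_trans (norm_add_le _ _) (add_le_add (hnonexp _ (hlam_pos (n+1)) _ _) ?_)
        have i2 := hres (lam (n+1)) (lam n) (hlam_pos (n+1)) (hlam_pos n) (xs n)
        rw [hratio, abs_of_pos (one_div_pos.mpr (pow_pos ht0 2))] at i2
        refine le_trans i2 ?_
        apply mul_le_mul_of_nonneg_left ?_ (one_div_pos.mpr (pow_pos ht0 2)).le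
        rw [norm_sub_rev]
        exact hJxx n
      have hanm : a n - a (n+1) = 2/((1-α)*t*(t+1)) := by
        rw [ha n, ha (n+1), hcast, ← htdef]
        have h1 : t ≠ 0 := ht0.ne'
        field_simp
        ring
      have hb3 : ‖(a (n+1) - a n) • (f (xs n) - Jr (lam n) (xs n))‖
          ≤ 2/((1-α)*t*(t+1)) * (2*K) := by
        have hdenpos : (0:ℝ) < (1-α)*t*(t+1) := mul_pos (mul_pos hβ ht0) ht10
        rw [norm_smul, Real.norm_eq_abs, abs_sub_comm, hanm,
          abs_of_nonneg (le_of_lt (div_pos two_pos hdenpos))]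
        exact mul_le_mul_of_nonneg_left (hfJ n) (le_of_lt (div_pos two_pos hdenpos))
      have hb4 : ‖e (n+1) - e n‖ ≤ ‖estar‖ * (1/t^2 - 1/(t+1)^2) := by
        have i1 : e (n+1) - e n = (1/(t+1)^2 - 1/t^2) • estar := by
          rw [he (n+1), he n, hcast, ← htdef, ← sub_smul]
        rw [i1, norm_smul, Real.norm_eq_abs]
        have i3 : 1/(t+1)^2 ≤ 1/t^2 :=
          one_div_le_one_div_of_le (pow_pos ht0 2) (pow_le_pow_left₀ ht0.le (by linarith) 2)
        have i2 : |1/(t+1)^2 - 1/t^2| = 1/t^2 - 1/(t+1)^2 := by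
          rw [abs_sub_comm]; exact abs_of_nonneg (by linarith)
        rw [i2]
        exact le_of_eq (by ring)
      have hsplit : ‖xs (n+1+1) - xs (n+1)‖
          ≤ ‖a (n+1) • (f (xs (n+1)) - f (xs n))‖
            + ‖(1 - a (n+1)) • (Jr (lam (n+1)) (xs (n+1)) - Jr (lam n) (xs n))‖
            + ‖(a (n+1) - a n) • (f (xs n) - Jr (lam n) (xs n))‖
            + ‖e (n+1) - e n‖ := by
        rw [hid]
        exact le_trans (norm_add_le _ _) (add_le_add_left norm_add₃_le _)
      have ha'β : a (n+1) * (1-α) = 2/(t+1) := by rw [haβ (n+1), hcast]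
      have hv : ‖xs (n+1+1) - xs (n+1)‖ ≤ a (n+1)*(α*d) + (1 - a (n+1))*(d + 1/t^2*(2*K))
          + 2/((1-α)*t*(t+1))*(2*K) + ‖estar‖*(1/t^2 - 1/(t+1)^2) := by
        linarith [hsplit, hb1, hb2, hb3, hb4]
      exact aux_succ t d _ K (c:ℝ) Ec Cc (a (n+1)) α ‖estar‖ ht2 hK1 hcr1 hEc0
        (norm_nonneg _) hEc hβ hαc (ha_nonneg (n+1)) (ha_le1 (n+1)) ha'β hCc_def ih hv
  -- asymptotic regularity with rate
  have hreg : ∀ n : ℕ, ‖Jr (lam n) (xs n) - xs n‖ ≤ (12*K*(c:ℝ) + 3*Ec) / ((n:ℝ) + Jn) := by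
    intro n
    have ht0 := hs0 n
    have ht2 := hs2 n
    have hid : Jr (lam n) (xs n) - xs n
        = (xs (n+1) - xs n) - a n • (f (xs n) - Jr (lam n) (xs n)) - e n := by
      rw [hxs n]; module
    have h1 : ‖Jr (lam n) (xs n) - xs n‖
        ≤ ‖xs (n+1) - xs n‖ + a n * ‖f (xs n) - Jr (lam n) (xs n)‖ + ‖e n‖ := by
      rw [hid]
      refine le_trans (norm_sub_le _ _) ?_
      refine add_le_add (le_trans (norm_sub_le _ _) (add_le_add_right ?_ _)) le_rfl
      rw [norm_smul, Real.norm_eq_abs, abs_of_nonneg (ha_nonneg n)]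
    have h2 : a n * ‖f (xs n) - Jr (lam n) (xs n)‖ ≤ (2*(c:ℝ)/((n:ℝ)+Jn)) * (2*K) :=
      mul_le_mul (ha_c n) (hfJ n) (norm_nonneg _) (by positivity)
    have h4 := hdiff n
    rw [hCc_def] at h4
    exact aux_reg _ _ _ _ ((n:ℝ)+(Jn:ℝ)) K (c:ℝ) Ec ‖estar‖ ht2 hK1 hcr1 hEc
      (norm_nonneg _) h1 h4 h2 (le_of_eq (hen n))
  have hCpos : (0:ℝ) < 12*K*(c:ℝ) + 3*Ec := by nlinarith
  constructor
  · intro k n hn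
    have hk1 : (0:ℝ) < (k:ℝ) + 1 := by positivity
    have ht0 := hs0 n
    have hA1 : 18*Kz*c^2*(k+1) + 3*⌈‖estar‖⌉₊*c*(k+1) ≤ n + 2*c := by
      calc 18*Kz*c^2*(k+1) + 3*⌈‖estar‖⌉₊*c*(k+1)
          ≤ (18*Kz*c^2*(k+1) + 3*⌈‖estar‖⌉₊*c*(k+1) - 2*c) + 2*c := le_tsub_add
        _ = Ψ₀ k + 2*c := by rw [hΨ₀ k]
        _ ≤ n + 2*c := add_le_add_left hn _
    have hA2 : 18*K*(c:ℝ)^2*((k:ℝ)+1) + 3*Ec*(c:ℝ)*((k:ℝ)+1) ≤ (n:ℝ) + (Jn:ℝ) := by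
      have h := (Nat.cast_le (α := ℝ)).mpr hA1
      push_cast at h
      rw [hK_def, hEc_def, hJnr]
      linarith
    have hfrac : (12*K*(c:ℝ)+3*Ec) * ((k:ℝ)+1) ≤ (n:ℝ) + (Jn:ℝ) :=
      aux_frac1 K (c:ℝ) Ec (k:ℝ) _ hK1 hcr1 hEc0 (Nat.cast_nonneg k) hA2
    refine le_trans (hreg n) ?_
    rw [div_le_div_iff₀ ht0 hk1]
    linarith
  · intro m k n hn
    have hk1 : (0:ℝ) < (k:ℝ) + 1 := by positivity
    have ht0 := hs0 n
    have hcomp : ‖Jr (lam m) (xs n) - xs n‖ ≤ 2 * ‖Jr (lam n) (xs n) - xs n‖ := by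
      have i1 : Jr (lam m) (xs n) - xs n
          = (Jr (lam m) (xs n) - Jr (lam n) (xs n)) + (Jr (lam n) (xs n) - xs n) := by abel
      have i2 := hres (lam m) (lam n) (hlam_pos m) (hlam_pos n) (xs n)
      have i3 : |1 - lam m / lam n| ≤ 1 := by
        have r0 : 0 ≤ lam m / lam n := div_nonneg (hlam_pos m).le (hlam_pos n).le
        have r2 : lam m / lam n ≤ 2 := by
          rw [div_le_iff₀ (hlam_pos n)]
          nlinarith [hlam_le2 m, hlam_ge1 n]
        rw [abs_le]; constructor <;> linarith
      rw [norm_sub_rev (xs n)] at i2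
      have i4 : ‖Jr (lam m) (xs n) - Jr (lam n) (xs n)‖ ≤ ‖Jr (lam n) (xs n) - xs n‖ := by
        refine le_trans i2 ?_
        nlinarith [norm_nonneg (Jr (lam n) (xs n) - xs n), abs_nonneg (1 - lam m / lam n)]
      rw [i1]
      refine le_trans (norm_add_le _ _) ?_
      linarith
    have hA1 : 36*Kz*c^2*(k+1) + 6*⌈‖estar‖⌉₊*c*(k+1) ≤ n + 2*c := by
      calc 36*Kz*c^2*(k+1) + 6*⌈‖estar‖⌉₊*c*(k+1)
          ≤ (36*Kz*c^2*(k+1) + 6*⌈‖estar‖⌉₊*c*(k+1) - 2*c) + 2*c := le_tsub_add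
        _ = Θ₀ k + 2*c := by rw [hΘ₀ k]
        _ ≤ n + 2*c := add_le_add_left hn _
    have hA2 : 36*K*(c:ℝ)^2*((k:ℝ)+1) + 6*Ec*(c:ℝ)*((k:ℝ)+1) ≤ (n:ℝ) + (Jn:ℝ) := by
      have h := (Nat.cast_le (α := ℝ)).mpr hA1
      push_cast at h
      rw [hK_def, hEc_def, hJnr]
      linarith
    have hfrac : 2*(12*K*(c:ℝ)+3*Ec) * ((k:ℝ)+1) ≤ (n:ℝ) + (Jn:ℝ) :=
      aux_frac2 K (c:ℝ) Ec (k:ℝ) _ hK1 hcr1 hEc0 (Nat.cast_nonneg k) hA2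
    refine le_trans hcomp ?_
    have := hreg n
    have h5 : 2 * ‖Jr (lam n) (xs n) - xs n‖ ≤ 2 * ((12*K*(c:ℝ) + 3*Ec) / ((n:ℝ) + Jn)) := by
      linarith
    refine le_trans h5 ?_
    rw [← mul_div_assoc]
    rw [div_le_div_iff₀ ht0 hk1]
    linarith
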